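/- Let Γ be a smooth map from ℝⁿ to the space of symmetric bilinear maps ℝⁿ × ℝⁿ → ℝⁿ, let x₀ ∈ ℝⁿ, let V be an open neighborhood of 0 in ℝⁿ, and let γ : V × [0,1] → ℝⁿ be smooth such that for each v ∈ V: γ(v,0) = x₀, ∂ₛγ(v,0) = v, and ∂ₛ²γ(v,s) = −Γ(γ(v,s))(∂ₛγ(v,s), ∂ₛγ(v,s)) for all s ∈ [0,1]. Define the exponential map exp : V → ℝⁿ by exp(v) := γ(v,1). Then for every smooth f : ℝⁿ → ℝ, the second Fréchet derivative of f ∘ exp at 0 is given by D²(f∘exp)(0)(u,w) = D²f(x₀)(u,w) − Df(x₀)(Γ(x₀)(u,w)) for all u, w ∈ ℝⁿ; i.e. it equals the second covariant differential of f at x₀ with respect to the symmetric connection with Christoffel symbols Γ. -/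

import Mathlib

open Set Metric

section helpers

variable {E F : Type*} [NormedAddCommGroup E] [NormedSpace ℝ E]
  [NormedAddCommGroup F] [NormedSpace ℝ F]

omit [NormedAddCommGroup E] [NormedSpace ℝ E] in
lemma upd0 (a c x : E) : Function.update ![a, c] 0 x = ![x, c] := by
  ext i; fin_cases i <;> simp

omit [NormedAddCommGroup E] [NormedSpace ℝ E] in
lemma upd1 (a c x : E) : Function.update ![a, c] 1 x = ![a, x] := by
  ext i; fin_cases i <;> simp

lemma tmap_add_left (T : ContinuousMultilinearMap ℝ (fun _ : Fin 2 => E) F) (a b c : E) :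
    T ![a + b, c] = T ![a, c] + T ![b, c] := by
  have := T.map_update_add ![a, c] 0 a b
  rwa [upd0, upd0, upd0] at this

lemma tmap_add_right (T : ContinuousMultilinearMap ℝ (fun _ : Fin 2 => E) F) (a b c : E) :
    T ![a, b + c] = T ![a, b] + T ![a, c] := by
  have := T.map_update_add ![a, b] 1 b c
  rwa [upd1, upd1, upd1] at this

lemma tmap_smul_left (T : ContinuousMultilinearMap ℝ (fun _ : Fin 2 => E) F) (s : ℝ) (a c : E) :
    T ![s • a, c] = s • T ![a, c] := by
  have := T.map_update_smul ![a, c] 0 s a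
  rwa [upd0, upd0] at this

lemma tmap_smul_right (T : ContinuousMultilinearMap ℝ (fun _ : Fin 2 => E) F) (s : ℝ) (a c : E) :
    T ![a, s • c] = s • T ![a, c] := by
  have := T.map_update_smul ![a, c] 1 s c
  rwa [upd1, upd1] at this

lemma tmap_expand (T : ContinuousMultilinearMap ℝ (fun _ : Fin 2 => E) F) (u w : E) :
    T ![u + w, u + w] = T ![u, u] + T ![u, w] + T ![w, u] + T ![w, w] := by
  rw [tmap_add_left, tmap_add_right, tmap_add_right]; abel

end helpers

lemma icc_mem_nhdsWithin_Ici {s : ℝ} (hs : s ∈ Ico (0:ℝ) 1) :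
    Icc (0:ℝ) 1 ∈ nhdsWithin s (Ici s) :=
  mem_nhdsWithin.mpr ⟨Iio 1, isOpen_Iio, hs.2,
    fun _ hx => ⟨le_trans hs.1 hx.2, le_of_lt hx.1⟩⟩

lemma geodesic_scaling {n : ℕ}
    (Γ : (EuclideanSpace ℝ (Fin n)) →
      ((EuclideanSpace ℝ (Fin n)) →L[ℝ] (EuclideanSpace ℝ (Fin n)) →L[ℝ] (EuclideanSpace ℝ (Fin n))))
    (hΓ : ContDiff ℝ (⊤ : ℕ∞) Γ)
    (x₀ : EuclideanSpace ℝ (Fin n)) (V : Set (EuclideanSpace ℝ (Fin n)))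
    (γ dγ : (EuclideanSpace ℝ (Fin n)) → ℝ → (EuclideanSpace ℝ (Fin n)))
    (hinit : ∀ v ∈ V, γ v 0 = x₀)
    (hvel : ∀ v ∈ V, dγ v 0 = v)
    (hderiv : ∀ v ∈ V, ∀ s ∈ Set.Icc (0 : ℝ) 1,
      HasDerivWithinAt (γ v) (dγ v s) (Set.Icc (0 : ℝ) 1) s)
    (hgeo : ∀ v ∈ V, ∀ s ∈ Set.Icc (0 : ℝ) 1,
      HasDerivWithinAt (dγ v) (-(Γ (γ v s) (dγ v s) (dγ v s))) (Set.Icc (0 : ℝ) 1) s)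
    {v : EuclideanSpace ℝ (Fin n)} (hv : v ∈ V) {t : ℝ} (ht : t ∈ Icc (0:ℝ) 1)
    (htv : t • v ∈ V) :
    ∀ s ∈ Icc (0:ℝ) 1, γ (t • v) s = γ v (t * s) := by
  classical
  set vf : (EuclideanSpace ℝ (Fin n)) × (EuclideanSpace ℝ (Fin n)) →
      (EuclideanSpace ℝ (Fin n)) × (EuclideanSpace ℝ (Fin n)) :=
    fun p => (p.2, -(Γ p.1 p.2 p.2)) with hvf_def
  have hvf_smooth : ContDiff ℝ (⊤ : ℕ∞) vf := by
    apply ContDiff.prodMk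
    · exact contDiff_snd
    · exact (((hΓ.comp contDiff_fst).clm_apply contDiff_snd).clm_apply contDiff_snd).neg
  set fc : ℝ → (EuclideanSpace ℝ (Fin n)) × (EuclideanSpace ℝ (Fin n)) :=
    fun s => (γ (t • v) s, dγ (t • v) s) with hfc_def
  set gc : ℝ → (EuclideanSpace ℝ (Fin n)) × (EuclideanSpace ℝ (Fin n)) :=
    fun s => (γ v (t * s), t • dγ v (t * s)) with hgc_def
  have hmul : ∀ s ∈ Icc (0:ℝ) 1, t * s ∈ Icc (0:ℝ) 1 := fun s hs =>
    ⟨mul_nonneg ht.1 hs.1, mul_le_one₀ ht.2 hs.1 hs.2⟩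
  have hmapsTo : MapsTo (fun s : ℝ => t * s) (Icc 0 1) (Icc 0 1) := fun s hs => hmul s hs
  have hfc' : ∀ s ∈ Icc (0:ℝ) 1, HasDerivWithinAt fc (vf (fc s)) (Icc 0 1) s := by
    intro s hs
    exact ((hderiv _ htv s hs).prodMk (hgeo _ htv s hs))
  have hgc' : ∀ s ∈ Icc (0:ℝ) 1, HasDerivWithinAt gc (vf (gc s)) (Icc 0 1) s := by
    intro s hs
    have h1 : HasDerivWithinAt (fun s : ℝ => t * s) t (Icc 0 1) s := by
      simpa using ((hasDerivAt_id s).const_mul t).hasDerivWithinAt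
    have hg1 : HasDerivWithinAt (fun s : ℝ => γ v (t * s)) (t • dγ v (t * s)) (Icc 0 1) s :=
      (hderiv v hv (t * s) (hmul s hs)).scomp s h1 hmapsTo
    have hg2 : HasDerivWithinAt (fun s : ℝ => t • dγ v (t * s))
        (t • (t • (-(Γ (γ v (t * s)) (dγ v (t * s)) (dγ v (t * s)))))) (Icc 0 1) s := by
      exact (((hgeo v hv (t * s) (hmul s hs)).scomp s h1 hmapsTo)).const_smul t
    have : vf (gc s) = (t • dγ v (t * s),
        t • (t • (-(Γ (γ v (t * s)) (dγ v (t * s)) (dγ v (t * s)))))) := by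
      simp only [hvf_def, hgc_def, Prod.mk.injEq]
      refine ⟨trivial, ?_⟩
      simp [map_smul, ContinuousLinearMap.smul_apply, smul_smul, smul_neg, mul_comm]
    rw [this]
    exact hg1.prodMk hg2
  have hfc_cont : ContinuousOn fc (Icc 0 1) :=
    fun s hs => (hfc' s hs).continuousWithinAt
  have hgc_cont : ContinuousOn gc (Icc 0 1) :=
    fun s hs => (hgc' s hs).continuousWithinAt
  obtain ⟨R₁, hR₁⟩ := ((isCompact_Icc.image_of_continuousOn hfc_cont).isBounded).subset_closedBall 0
  obtain ⟨R₂, hR₂⟩ := ((isCompact_Icc.image_of_continuousOn hgc_cont).isBounded).subset_closedBall 0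
  set R : ℝ := max R₁ R₂ with hR_def
  have hfc_mem : ∀ s ∈ Icc (0:ℝ) 1,
      fc s ∈ closedBall (0 : (EuclideanSpace ℝ (Fin n)) × (EuclideanSpace ℝ (Fin n))) R :=
    fun s hs => closedBall_subset_closedBall (le_max_left _ _) (hR₁ ⟨s, hs, rfl⟩)
  have hgc_mem : ∀ s ∈ Icc (0:ℝ) 1,
      gc s ∈ closedBall (0 : (EuclideanSpace ℝ (Fin n)) × (EuclideanSpace ℝ (Fin n))) R :=
    fun s hs => closedBall_subset_closedBall (le_max_right _ _) (hR₂ ⟨s, hs, rfl⟩)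
  have hdiff : ∀ x ∈ closedBall (0 : (EuclideanSpace ℝ (Fin n)) × (EuclideanSpace ℝ (Fin n))) R,
      DifferentiableAt ℝ vf x :=
    fun x _ => (hvf_smooth.differentiable (by simp)).differentiableAt
  have hcont_fderiv : ContinuousOn (fderiv ℝ vf)
      (closedBall (0 : (EuclideanSpace ℝ (Fin n)) × (EuclideanSpace ℝ (Fin n))) R) :=
    (hvf_smooth.continuous_fderiv (by simp)).continuousOn
  obtain ⟨C, hC⟩ :=
    (isCompact_closedBall (0 : (EuclideanSpace ℝ (Fin n)) × (EuclideanSpace ℝ (Fin n))) R).exists_bound_of_continuousOn hcont_fderiv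
  have hlip : LipschitzOnWith C.toNNReal vf
      (closedBall (0 : (EuclideanSpace ℝ (Fin n)) × (EuclideanSpace ℝ (Fin n))) R) := by
    apply (convex_closedBall _ _).lipschitzOnWith_of_nnnorm_fderiv_le hdiff
    intro x hx
    rw [← norm_toNNReal]
    exact Real.toNNReal_mono (hC x hx)
  have huniq : EqOn fc gc (Icc 0 1) := by
    apply ODE_solution_unique_of_mem_Icc_right
      (v := fun _ p => vf p)
      (s := fun _ => closedBall (0 : (EuclideanSpace ℝ (Fin n)) × (EuclideanSpace ℝ (Fin n))) R)
      (K := C.toNNReal)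
    · intro _ _; exact hlip
    · exact hfc_cont
    · intro s hs
      exact (hfc' s ⟨hs.1, le_of_lt hs.2⟩).mono_of_mem_nhdsWithin (icc_mem_nhdsWithin_Ici hs)
    · intro s hs; exact hfc_mem s ⟨hs.1, le_of_lt hs.2⟩
    · exact hgc_cont
    · intro s hs
      exact (hgc' s ⟨hs.1, le_of_lt hs.2⟩).mono_of_mem_nhdsWithin (icc_mem_nhdsWithin_Ici hs)
    · intro s hs; exact hgc_mem s ⟨hs.1, le_of_lt hs.2⟩
    · simp only [hfc_def, hgc_def, mul_zero]
      rw [hinit _ htv, hvel _ htv, hinit _ hv, hvel _ hv]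
  intro s hs
  exact congrArg Prod.fst (huniq hs)

/-- The exponential map of a symmetric connection transforms the second covariant
differential into the ordinary second differential: for the geodesic family `γ(v,s)` with
`γ(v,0) = x₀`, `∂ₛγ(v,0) = v`, `∂ₛ²γ = −Γ(γ)(∂ₛγ,∂ₛγ)`, and `exp(v) := γ(v,1)`, one has
`D²(f∘exp)(0)(u,w) = D²f(x₀)(u,w) − Df(x₀)(Γ(x₀)(u,w))`. -/
theorem statement13 (n : ℕ)
    (Γ : EuclideanSpace ℝ (Fin n) →
      (EuclideanSpace ℝ (Fin n) →L[ℝ] EuclideanSpace ℝ (Fin n) →L[ℝ] EuclideanSpace ℝ (Fin n)))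
    (hΓ : ContDiff ℝ (⊤ : ℕ∞) Γ)
    (hΓsymm : ∀ x u w, Γ x u w = Γ x w u)
    (x₀ : EuclideanSpace ℝ (Fin n))
    (V : Set (EuclideanSpace ℝ (Fin n))) (hV : IsOpen V) (h0V : (0 : EuclideanSpace ℝ (Fin n)) ∈ V)
    (γ dγ : EuclideanSpace ℝ (Fin n) → ℝ → EuclideanSpace ℝ (Fin n))
    (hsmooth : ContDiffOn ℝ (⊤ : ℕ∞) (fun q : EuclideanSpace ℝ (Fin n) × ℝ => γ q.1 q.2)
      (V ×ˢ Set.Icc (0 : ℝ) 1))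
    (hinit : ∀ v ∈ V, γ v 0 = x₀)
    (hvel : ∀ v ∈ V, dγ v 0 = v)
    (hderiv : ∀ v ∈ V, ∀ s ∈ Set.Icc (0 : ℝ) 1,
      HasDerivWithinAt (γ v) (dγ v s) (Set.Icc (0 : ℝ) 1) s)
    (hgeo : ∀ v ∈ V, ∀ s ∈ Set.Icc (0 : ℝ) 1,
      HasDerivWithinAt (dγ v) (-(Γ (γ v s) (dγ v s) (dγ v s))) (Set.Icc (0 : ℝ) 1) s) :
    ∀ f : EuclideanSpace ℝ (Fin n) → ℝ, ContDiff ℝ (⊤ : ℕ∞) f →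
      ∀ u w : EuclideanSpace ℝ (Fin n),
        iteratedFDeriv ℝ 2 (fun v => f (γ v 1)) 0 ![u, w]
          = iteratedFDeriv ℝ 2 f x₀ ![u, w] - fderiv ℝ f x₀ (Γ x₀ u w) := by
  intro f hf u w
  classical
  set F : EuclideanSpace ℝ (Fin n) → ℝ := fun v => f (γ v 1) with hF_def
  have h01 : (1:ℝ) ∈ Icc (0:ℝ) 1 := ⟨zero_le_one, le_rfl⟩
  have h00 : (0:ℝ) ∈ Icc (0:ℝ) 1 := ⟨le_rfl, zero_le_one⟩
  -- smoothness of the exponential map and of F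
  have hexp : ContDiffOn ℝ (⊤ : ℕ∞) (fun v => γ v 1) V := by
    have h1 : ContDiff ℝ (⊤ : ℕ∞) (fun v : EuclideanSpace ℝ (Fin n) => (v, (1:ℝ))) :=
      contDiff_id.prodMk contDiff_const
    have h2 : MapsTo (fun v : EuclideanSpace ℝ (Fin n) => (v, (1:ℝ))) V (V ×ˢ Icc 0 1) :=
      fun v hv => ⟨hv, h01⟩
    exact hsmooth.comp h1.contDiffOn h2
  have hF : ContDiffOn ℝ (⊤ : ℕ∞) F V := hf.comp_contDiffOn hexp
  have hF0 : ContDiffAt ℝ (⊤ : ℕ∞) F 0 := hF.contDiffAt (hV.mem_nhds h0V)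
  -- a closed ball inside V
  obtain ⟨r, hr, hball⟩ : ∃ r > 0, closedBall (0 : EuclideanSpace ℝ (Fin n)) r ⊆ V :=
    (Metric.nhds_basis_closedBall.mem_iff.mp (hV.mem_nhds h0V))
  set T := iteratedFDeriv ℝ 2 F 0 with hT_def
  set Tf := iteratedFDeriv ℝ 2 f x₀ with hTf_def
  have hfdiff : Differentiable ℝ f := hf.differentiable (by simp)
  have hffd : Differentiable ℝ (fderiv ℝ f) :=
    (hf.fderiv_right (m := (1:ℕ∞)) (by exact_mod_cast le_top)).differentiable
      (by simp)
  -- the diagonal identity on the closed ball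
  have diag : ∀ v ∈ closedBall (0 : EuclideanSpace ℝ (Fin n)) r,
      T ![v, v] = Tf ![v, v] - fderiv ℝ f x₀ (Γ x₀ v v) := by
    intro v hv
    have hvV : v ∈ V := hball hv
    have htv : ∀ t ∈ Icc (0:ℝ) 1, t • v ∈ V := by
      intro t ht
      apply hball
      rw [mem_closedBall_zero_iff] at hv ⊢
      rw [norm_smul]
      calc ‖t‖ * ‖v‖ ≤ 1 * r := by
            apply mul_le_mul _ hv (norm_nonneg v) zero_le_one
            rw [Real.norm_eq_abs, abs_of_nonneg ht.1]; exact ht.2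
        _ = r := one_mul r
    have hEqOn : ∀ t ∈ Icc (0:ℝ) 1, F (t • v) = f (γ v t) := by
      intro t ht
      have := geodesic_scaling Γ hΓ x₀ V γ dγ hinit hvel hderiv hgeo hvV ht (htv t ht) 1 h01
      rw [hF_def]
      simp only []
      rw [this, mul_one]
    have hdF : ∀ x ∈ V, DifferentiableAt ℝ F x := fun x hx =>
      (hF.differentiableOn (by simp)).differentiableAt (hV.mem_nhds hx)
    have step1 : ∀ t ∈ Icc (0:ℝ) 1,
        HasDerivWithinAt (fun t : ℝ => F (t • v)) ((fderiv ℝ F (t • v)) v) (Icc 0 1) t := by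
      intro t ht
      have hsm : HasDerivWithinAt (fun t : ℝ => t • v) v (Icc (0:ℝ) 1) t := by
        simpa using ((hasDerivAt_id t).smul_const v).hasDerivWithinAt
      have := (hdF _ (htv t ht)).hasFDerivAt.comp_hasDerivWithinAt t hsm
      exact this
    have step2 : ∀ t ∈ Icc (0:ℝ) 1,
        HasDerivWithinAt (fun t : ℝ => f (γ v t)) (fderiv ℝ f (γ v t) (dγ v t)) (Icc 0 1) t :=
      fun t ht => (hfdiff (γ v t)).hasFDerivAt.comp_hasDerivWithinAt t (hderiv v hvV t ht)
    have step4 : ∀ t ∈ Icc (0:ℝ) 1, fderiv ℝ f (γ v t) (dγ v t) = (fderiv ℝ F (t • v)) v := by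
      intro t ht
      have h2 : HasDerivWithinAt (fun t : ℝ => F (t • v))
          (fderiv ℝ f (γ v t) (dγ v t)) (Icc 0 1) t :=
        (step2 t ht).congr (fun y hy => hEqOn y hy) (hEqOn t ht)
      have hu := (uniqueDiffOn_Icc one_pos) t ht
      rw [← h2.derivWithin hu, ← (step1 t ht).derivWithin hu]
    have step5 : HasDerivWithinAt (fun t : ℝ => fderiv ℝ f (γ v t) (dγ v t))
        (Tf ![v, v] - fderiv ℝ f x₀ (Γ x₀ v v)) (Icc 0 1) 0 := by
      have hc : HasDerivWithinAt (fun t : ℝ => fderiv ℝ f (γ v t))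
          ((fderiv ℝ (fderiv ℝ f) (γ v 0)) (dγ v 0)) (Icc 0 1) 0 :=
        (hffd (γ v 0)).hasFDerivAt.comp_hasDerivWithinAt 0 (hderiv v hvV 0 h00)
      have hu0 : HasDerivWithinAt (dγ v)
          (-(Γ (γ v 0) (dγ v 0) (dγ v 0))) (Icc 0 1) 0 := hgeo v hvV 0 h00
      have hcomb := hc.clm_apply hu0
      have hval : (fderiv ℝ (fderiv ℝ f) (γ v 0)) (dγ v 0) (dγ v 0)
          + (fderiv ℝ f (γ v 0)) (-(Γ (γ v 0) (dγ v 0) (dγ v 0)))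
          = Tf ![v, v] - fderiv ℝ f x₀ (Γ x₀ v v) := by
        rw [hinit v hvV, hvel v hvV, hTf_def, iteratedFDeriv_two_apply]
        simp [sub_eq_add_neg]
      rw [hval] at hcomb
      exact hcomb
    have step6 : HasDerivAt (fun t : ℝ => (fderiv ℝ F (t • v)) v) (T ![v, v]) 0 := by
      have hdF' : DifferentiableAt ℝ (fderiv ℝ F) 0 :=
        (hF0.fderiv_right (m := (1:ℕ∞)) (by exact_mod_cast le_top)).differentiableAt
          (by simp)
      have hsm : HasDerivAt (fun t : ℝ => t • v) v 0 := by
        simpa using (hasDerivAt_id (0:ℝ)).smul_const v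
      have h1 : HasDerivAt (fun t : ℝ => fderiv ℝ F (t • v))
          ((fderiv ℝ (fderiv ℝ F) 0) v) 0 :=
        hdF'.hasFDerivAt.comp_hasDerivAt_of_eq 0 hsm (by rw [zero_smul])
      have h2 := h1.clm_apply (hasDerivAt_const 0 v)
      have hval : (fderiv ℝ (fderiv ℝ F) 0) v v + (fderiv ℝ F ((0:ℝ) • v)) 0 = T ![v, v] := by
        rw [hT_def, iteratedFDeriv_two_apply]
        simp
      rw [hval] at h2
      exact h2
    have h7 : HasDerivWithinAt (fun t : ℝ => (fderiv ℝ F (t • v)) v)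
        (Tf ![v, v] - fderiv ℝ f x₀ (Γ x₀ v v)) (Icc 0 1) 0 :=
      step5.congr (fun y hy => (step4 y hy).symm) ((step4 0 h00).symm)
    have h8 := step6.hasDerivWithinAt (s := Icc (0:ℝ) 1)
    have hu := (uniqueDiffOn_Icc one_pos) 0 h00
    exact (h8.derivWithin hu).symm.trans (h7.derivWithin hu)
  -- symmetry
  have hTsym : ∀ a b, T ![a, b] = T ![b, a] := by
    intro a b
    rw [hT_def, iteratedFDeriv_two_apply, iteratedFDeriv_two_apply]
    simp only [Matrix.cons_val_zero, Matrix.cons_val_one, Matrix.head_cons]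
    exact (hF0.isSymmSndFDerivAt (by rw [minSmoothness_of_isRCLikeNormedField]; exact WithTop.coe_le_coe.mpr le_top)).eq a b
  have hfsym : ∀ a b, Tf ![a, b] = Tf ![b, a] := by
    intro a b
    rw [hTf_def, iteratedFDeriv_two_apply, iteratedFDeriv_two_apply]
    simp only [Matrix.cons_val_zero, Matrix.cons_val_one, Matrix.head_cons]
    exact (hf.contDiffAt.isSymmSndFDerivAt (by rw [minSmoothness_of_isRCLikeNormedField]; exact WithTop.coe_le_coe.mpr le_top)).eq a b
  -- polarization on the small ball
  have P1 : ∀ a ∈ closedBall (0 : EuclideanSpace ℝ (Fin n)) (r/2),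
      ∀ b ∈ closedBall (0 : EuclideanSpace ℝ (Fin n)) (r/2),
      T ![a, b] = Tf ![a, b] - fderiv ℝ f x₀ (Γ x₀ a b) := by
    intro a ha b hb
    rw [mem_closedBall_zero_iff] at ha hb
    have hab : a + b ∈ closedBall (0 : EuclideanSpace ℝ (Fin n)) r := by
      rw [mem_closedBall_zero_iff]
      calc ‖a + b‖ ≤ ‖a‖ + ‖b‖ := norm_add_le a b
        _ ≤ r/2 + r/2 := add_le_add ha hb
        _ = r := by ring
    have hA := diag a (by rw [mem_closedBall_zero_iff]; linarith)
    have hB := diag b (by rw [mem_closedBall_zero_iff]; linarith)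
    have hAB := diag (a + b) hab
    rw [tmap_expand, tmap_expand] at hAB
    have hΓexp : fderiv ℝ f x₀ (Γ x₀ (a+b) (a+b))
        = fderiv ℝ f x₀ (Γ x₀ a a) + fderiv ℝ f x₀ (Γ x₀ a b)
          + fderiv ℝ f x₀ (Γ x₀ b a) + fderiv ℝ f x₀ (Γ x₀ b b) := by
      simp only [map_add, ContinuousLinearMap.add_apply]
      ring
    rw [hΓexp] at hAB
    have h1 := hTsym a b
    have h2 := hfsym a b
    have h3 : fderiv ℝ f x₀ (Γ x₀ a b) = fderiv ℝ f x₀ (Γ x₀ b a) := by rw [hΓsymm x₀ a b]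
    linarith
  -- scaling to arbitrary vectors
  set c : ℝ := (r/2) / (1 + ‖u‖ + ‖w‖) with hc_def
  have hden : (0:ℝ) < 1 + ‖u‖ + ‖w‖ := by positivity
  have hc : 0 < c := div_pos (by linarith) hden
  have hcball : ∀ z : EuclideanSpace ℝ (Fin n), ‖z‖ ≤ ‖u‖ + ‖w‖ →
      c • z ∈ closedBall (0 : EuclideanSpace ℝ (Fin n)) (r/2) := by
    intro z hz
    rw [mem_closedBall_zero_iff, norm_smul, Real.norm_eq_abs, abs_of_pos hc]
    have h1 : c * ‖z‖ ≤ c * (1 + ‖u‖ + ‖w‖) := by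
      apply mul_le_mul_of_nonneg_left _ hc.le
      linarith
    have h2 : c * (1 + ‖u‖ + ‖w‖) = r/2 := by
      rw [hc_def]; field_simp
    linarith
  have hcu := hcball u (by linarith [norm_nonneg w])
  have hcw := hcball w (by linarith [norm_nonneg u])
  have hP := P1 (c • u) hcu (c • w) hcw
  rw [tmap_smul_left, tmap_smul_right, tmap_smul_left, tmap_smul_right] at hP
  have hΓsc : fderiv ℝ f x₀ (Γ x₀ (c • u) (c • w)) = c * (c * fderiv ℝ f x₀ (Γ x₀ u w)) := by
    simp [map_smul, ContinuousLinearMap.smul_apply, smul_eq_mul]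
  rw [hΓsc] at hP
  have hc2 : c * c ≠ 0 := by positivity
  apply mul_left_cancel₀ hc2
  simp only [smul_eq_mul] at hP
  ring_nf
  ring_nf at hP
  linarith
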